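/- Let x_i = g^{2^i} in ℓ¹(ℤ) where g = (f₁+f₋₁)/2 and powers are convolution powers. Then for all i > j and every z ∈ ℓ¹(ℤ) with ‖z‖₁ ≤ 1, ‖x_i * z − x_j‖₁ ≥ 1/4; while for i ≤ j there exists z with ‖z‖₁ ≤ 1 and x_i * z = x_j. Hence the formula φ(x,y) = inf_{‖z‖≤1} ‖xz − y‖ orders the sequence (x_i), witnessing the order property (instability) of the Banach algebra ℓ¹(ℤ). -/

import Mathlib

/-- The element `g = (f₁ + f₋₁)/2` of `ℓ¹(ℤ)`, realized in the convolution algebra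
`AddMonoidAlgebra ℂ ℤ` (its convolution powers are finitely supported). -/
noncomputable def ellOneG : AddMonoidAlgebra ℂ ℤ :=
  (1 / 2 : ℂ) • (AddMonoidAlgebra.single (1 : ℤ) (1 : ℂ) +
    AddMonoidAlgebra.single (-1 : ℤ) (1 : ℂ))

/-- Convolution of a finitely supported `x` with an arbitrary `z ∈ ℓ¹(ℤ)`:
`(x * z)(n) = Σ_m x(m) z(n − m)`. -/
noncomputable def ellOneConv (x : AddMonoidAlgebra ℂ ℤ) (z : ℤ → ℂ) : ℤ → ℂ :=
  fun n => x.coeff.sum fun m c => c * z (n - m)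

/-! ### Basic properties of the convolution -/

lemma conv_single (a : ℤ) (c : ℂ) (z : ℤ → ℂ) (n : ℤ) :
    ellOneConv (AddMonoidAlgebra.single a c) z n = c * z (n - a) := by
  unfold ellOneConv; exact AddMonoidAlgebra.sum_single_index (by simp)

lemma conv_add (x y : AddMonoidAlgebra ℂ ℤ) (z : ℤ → ℂ) :
    ellOneConv (x + y) z = ellOneConv x z + ellOneConv y z := by
  funext n; exact Finsupp.sum_add_index (by simp) (by intros; ring)

lemma conv_zero (z : ℤ → ℂ) : ellOneConv 0 z = 0 := by funext n; simp [ellOneConv]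

lemma conv_finsupp (x y : AddMonoidAlgebra ℂ ℤ) (n : ℤ) :
    ellOneConv x (⇑y.coeff) n = (x * y).coeff n := by
  induction x using AddMonoidAlgebra.induction with
  | zero => rw [conv_zero]; show (0:ℂ) = ((0 : AddMonoidAlgebra ℂ ℤ) * y).coeff n; rw [zero_mul]; rfl
  | single_add a c f ha hc ih =>
    set f' : AddMonoidAlgebra ℂ ℤ := f with hf'
    have h1 : (AddMonoidAlgebra.single a c + f' : AddMonoidAlgebra ℂ ℤ) * y
        = AddMonoidAlgebra.single a c * y + f' * y := add_mul _ _ _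
    show ellOneConv (AddMonoidAlgebra.single a c + f') (⇑y.coeff) n = _
    rw [conv_add, h1]
    show ellOneConv (AddMonoidAlgebra.single a c) (⇑y.coeff) n + ellOneConv f' (⇑y.coeff) n = _
    rw [conv_single, ih]
    show _ = (AddMonoidAlgebra.single a c * y).coeff n + (f' * y).coeff n
    rw [AddMonoidAlgebra.coeff_single_mul_apply]
    have h2 : n - a = -a + n := by ring
    rw [h2]

/-! ### ℓ¹ norms -/

lemma summable_norm_finsupp (x : AddMonoidAlgebra ℂ ℤ) : Summable (fun n => ‖x.coeff n‖) :=
  summable_of_ne_finset_zero (s := x.coeff.support)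
    (by intro b hb; simp [Finsupp.notMem_support_iff.1 hb])

lemma tsum_norm_single (a : ℤ) (c : ℂ) :
    ∑' n, ‖(AddMonoidAlgebra.single a c : AddMonoidAlgebra ℂ ℤ).coeff n‖ = ‖c‖ := by
  rw [tsum_eq_single a]
  · show ‖Finsupp.single a c a‖ = ‖c‖
    rw [Finsupp.single_eq_same]
  · intro b hb
    show ‖Finsupp.single a c b‖ = 0
    rw [Finsupp.single_eq_of_ne' fun h => hb h.symm, norm_zero]

lemma norm_single_add (a : ℤ) (c : ℂ) (x : AddMonoidAlgebra ℂ ℤ) (hxa : x.coeff a = 0) (n : ℤ) :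
    ‖(AddMonoidAlgebra.single a c + x : AddMonoidAlgebra ℂ ℤ).coeff n‖
      = ‖(AddMonoidAlgebra.single a c : AddMonoidAlgebra ℂ ℤ).coeff n‖ + ‖x.coeff n‖ := by
  rcases eq_or_ne n a with rfl | h
  · show ‖Finsupp.single n c n + x.coeff n‖ = ‖Finsupp.single n c n‖ + ‖x.coeff n‖
    rw [hxa, Finsupp.single_eq_same]; simp
  · show ‖Finsupp.single a c n + x.coeff n‖ = ‖Finsupp.single a c n‖ + ‖x.coeff n‖
    rw [Finsupp.single_eq_of_ne' fun h' => h h'.symm]; simp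

lemma tsum_norm_single_add (a : ℤ) (c : ℂ) (x : AddMonoidAlgebra ℂ ℤ) (hxa : x.coeff a = 0) :
    ∑' n, ‖(AddMonoidAlgebra.single a c + x : AddMonoidAlgebra ℂ ℤ).coeff n‖
      = ‖c‖ + ∑' n, ‖x.coeff n‖ := by
  calc ∑' n, ‖(AddMonoidAlgebra.single a c + x : AddMonoidAlgebra ℂ ℤ).coeff n‖
      = ∑' n, (‖(AddMonoidAlgebra.single a c : AddMonoidAlgebra ℂ ℤ).coeff n‖ + ‖x.coeff n‖) :=
        tsum_congr fun n => norm_single_add a c x hxa n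
    _ = ‖c‖ + ∑' n, ‖x.coeff n‖ := by
        rw [Summable.tsum_add (summable_norm_finsupp _) (summable_norm_finsupp _), tsum_norm_single]

/-- Submultiplicativity of the ℓ¹ norm for the convolution, together with summability. -/
lemma conv_bound (x : AddMonoidAlgebra ℂ ℤ) (z : ℤ → ℂ) (hz : Summable (fun n => ‖z n‖)) :
    Summable (fun n => ‖ellOneConv x z n‖) ∧
    ∑' n, ‖ellOneConv x z n‖ ≤ (∑' n, ‖x.coeff n‖) * ∑' n, ‖z n‖ := by
  have hz0 : 0 ≤ ∑' n, ‖z n‖ := tsum_nonneg fun n => norm_nonneg _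
  induction x using AddMonoidAlgebra.induction with
  | zero =>
    constructor
    · rw [conv_zero]; simpa using summable_zero
    · rw [conv_zero]
      have : ∑' (n : ℤ), ‖(0 : ℤ → ℂ) n‖ = 0 := by simp
      rw [this]
      positivity
  | single_add a c f haf hc ih =>
    set f' : AddMonoidAlgebra ℂ ℤ := f with hf'
    have hshift : ∀ n, ellOneConv (AddMonoidAlgebra.single a c) z n = c * z (n - a) :=
      fun n => conv_single a c z n
    have hsum1 : Summable (fun n => ‖ellOneConv (AddMonoidAlgebra.single a c) z n‖) := by
      have : Summable (fun n : ℤ => ‖c‖ * ‖z (n - a)‖) :=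
        ((hz.comp_injective (Equiv.subRight a).injective).mul_left ‖c‖)
      refine this.congr fun n => ?_
      rw [hshift n, norm_mul]
    have htsum1 : ∑' n, ‖ellOneConv (AddMonoidAlgebra.single a c) z n‖ = ‖c‖ * ∑' n, ‖z n‖ := by
      calc ∑' n, ‖ellOneConv (AddMonoidAlgebra.single a c) z n‖
          = ∑' n, ‖c‖ * ‖z (n - a)‖ := tsum_congr fun n => by rw [hshift n, norm_mul]
        _ = ‖c‖ * ∑' n, ‖z (n - a)‖ := tsum_mul_left
        _ = ‖c‖ * ∑' n, ‖z n‖ := by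
            congr 1
            exact ((Equiv.subRight a).tsum_eq fun n => ‖z n‖)
    obtain ⟨ihs, ihb⟩ := ih
    have key : ∀ n, ‖ellOneConv (AddMonoidAlgebra.single a c + f') z n‖ ≤
        ‖ellOneConv (AddMonoidAlgebra.single a c) z n‖ + ‖ellOneConv f' z n‖ := by
      intro n
      rw [conv_add]
      exact norm_add_le _ _
    have hsum : Summable (fun n => ‖ellOneConv (AddMonoidAlgebra.single a c + f') z n‖) :=
      Summable.of_nonneg_of_le (fun n => norm_nonneg _) key (hsum1.add ihs)
    refine ⟨hsum, ?_⟩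
    calc ∑' n, ‖ellOneConv (AddMonoidAlgebra.single a c + f') z n‖
        ≤ ∑' n, (‖ellOneConv (AddMonoidAlgebra.single a c) z n‖ + ‖ellOneConv f' z n‖) :=
          Summable.tsum_le_tsum key hsum (hsum1.add ihs)
      _ = (‖c‖ * ∑' n, ‖z n‖) + ∑' n, ‖ellOneConv f' z n‖ := by
          rw [Summable.tsum_add hsum1 ihs, htsum1]
      _ ≤ (‖c‖ * ∑' n, ‖z n‖) + (∑' n, ‖f'.coeff n‖) * ∑' n, ‖z n‖ := by linarith
      _ = (‖c‖ + ∑' n, ‖f'.coeff n‖) * ∑' n, ‖z n‖ := by ring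
      _ = (∑' n, ‖(AddMonoidAlgebra.single a c + f' : AddMonoidAlgebra ℂ ℤ).coeff n‖) * ∑' n, ‖z n‖ := by
          rw [tsum_norm_single_add a c f' (Finsupp.notMem_support_iff.1 haf)]

lemma ellOneG_eq : ellOneG = AddMonoidAlgebra.single (1 : ℤ) (1/2 : ℂ)
    + AddMonoidAlgebra.single (-1 : ℤ) (1/2 : ℂ) := by
  rw [ellOneG, smul_add]
  show (1/2 : ℂ) • AddMonoidAlgebra.single (1:ℤ) (1:ℂ) + (1/2 : ℂ) • AddMonoidAlgebra.single (-1:ℤ) (1:ℂ) = _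
  rw [AddMonoidAlgebra.smul_single, AddMonoidAlgebra.smul_single, smul_eq_mul, mul_one]

lemma tsum_norm_g : ∑' n, ‖ellOneG.coeff n‖ = 1 := by
  rw [ellOneG_eq, tsum_norm_single_add 1 (1/2 : ℂ) (AddMonoidAlgebra.single (-1 : ℤ) (1/2 : ℂ))
    (Finsupp.single_eq_of_ne' (by norm_num)), tsum_norm_single]
  norm_num

lemma tsum_norm_gpow (k : ℕ) : ∑' n, ‖(ellOneG ^ k).coeff n‖ ≤ 1 := by
  induction k with
  | zero =>
    have h1 : (ellOneG ^ 0 : AddMonoidAlgebra ℂ ℤ)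
        = AddMonoidAlgebra.single (0 : ℤ) (1 : ℂ) := by
      rw [pow_zero]; rfl
    rw [h1, tsum_norm_single]
    norm_num
  | succ k ih =>
    have h1 : ∀ n, (ellOneG ^ (k+1) : AddMonoidAlgebra ℂ ℤ).coeff n
        = ellOneConv ellOneG (⇑(ellOneG ^ k).coeff) n := by
      intro n
      rw [conv_finsupp, ← pow_succ']
    have h2 := conv_bound ellOneG (⇑(ellOneG ^ k).coeff) (summable_norm_finsupp _)
    calc ∑' n, ‖(ellOneG ^ (k+1) : AddMonoidAlgebra ℂ ℤ).coeff n‖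
        = ∑' n, ‖ellOneConv ellOneG (⇑(ellOneG ^ k).coeff) n‖ := tsum_congr fun n => by rw [h1]
      _ ≤ (∑' n, ‖ellOneG.coeff n‖) * ∑' n, ‖(ellOneG ^ k).coeff n‖ := h2.2
      _ ≤ 1 * 1 := by
          refine mul_le_mul (le_of_eq tsum_norm_g) ih (tsum_nonneg fun n => norm_nonneg _)
            (by norm_num)
      _ = 1 := by norm_num

/-! ### The character at a point of the circle -/

noncomputable def Fchar (w : ℂ) (hw : w ≠ 0) : Multiplicative ℤ →* ℂ where
  toFun n := w ^ (Multiplicative.toAdd n)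
  map_one' := by simp
  map_mul' a b := by simp [zpow_add₀ hw]

noncomputable def chiF (w : ℂ) (hw : w ≠ 0) : AddMonoidAlgebra ℂ ℤ →ₐ[ℂ] ℂ :=
  AddMonoidAlgebra.lift ℂ ℂ ℤ (Fchar w hw)

lemma chiF_apply (w : ℂ) (hw : w ≠ 0) (x : AddMonoidAlgebra ℂ ℤ) :
    chiF w hw x = x.coeff.sum fun a b => b * w ^ a := by
  rw [chiF, AddMonoidAlgebra.lift_apply]
  simp [Fchar, smul_eq_mul]

lemma chiF_single (w : ℂ) (hw : w ≠ 0) (a : ℤ) (c : ℂ) :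
    chiF w hw (AddMonoidAlgebra.single a c) = c * w ^ a := by
  rw [chiF_apply]
  exact Finsupp.sum_single_index (by simp)

lemma summable_mul_char {w : ℂ} (hw1 : ‖w‖ = 1) (v : ℤ → ℂ)
    (hv : Summable (fun n => ‖v n‖)) : Summable (fun n => v n * w ^ n) := by
  rw [← summable_norm_iff]
  refine hv.congr fun n => ?_
  rw [norm_mul, norm_zpow, hw1, one_zpow, mul_one]

lemma tsum_finsupp_char {w : ℂ} (hw : w ≠ 0) (x : AddMonoidAlgebra ℂ ℤ) :
    ∑' n : ℤ, x.coeff n * w ^ n = chiF w hw x := by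
  rw [chiF_apply,
    tsum_eq_sum (s := x.coeff.support) (by intro b hb; rw [Finsupp.notMem_support_iff.1 hb, zero_mul])]
  rfl

lemma chi_mult {w : ℂ} (hw : w ≠ 0) (hw1 : ‖w‖ = 1) (x : AddMonoidAlgebra ℂ ℤ)
    (z : ℤ → ℂ) (hz : Summable (fun n => ‖z n‖)) :
    ∑' n : ℤ, ellOneConv x z n * w ^ n = chiF w hw x * ∑' n : ℤ, z n * w ^ n := by
  induction x using AddMonoidAlgebra.induction with
  | zero =>
    rw [conv_zero, map_zero, zero_mul]
    simp
  | single_add a c f haf hc ih =>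
    set f' : AddMonoidAlgebra ℂ ℤ := f with hf'
    have hsummand : ∀ n : ℤ, ellOneConv (AddMonoidAlgebra.single a c + f') z n * w ^ n
        = c * z (n - a) * w ^ n + ellOneConv f' z n * w ^ n := by
      intro n
      rw [conv_add]
      show (ellOneConv (AddMonoidAlgebra.single a c) z n + ellOneConv f' z n) * w ^ n = _
      rw [conv_single, add_mul]
    have hs1 : Summable (fun n : ℤ => c * z (n - a) * w ^ n) := by
      rw [← summable_norm_iff]
      have : Summable (fun n : ℤ => ‖c‖ * ‖z (n - a)‖) :=
        ((hz.comp_injective (Equiv.subRight a).injective).mul_left ‖c‖)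
      refine this.congr fun n => ?_
      rw [norm_mul, norm_mul, norm_zpow, hw1, one_zpow, mul_one]
    have hs2 : Summable (fun n : ℤ => ellOneConv f' z n * w ^ n) :=
      summable_mul_char hw1 _ (conv_bound f' z hz).1
    have hsingle : ∑' n : ℤ, c * z (n - a) * w ^ n = (c * w ^ a) * ∑' n : ℤ, z n * w ^ n := by
      have h1 : ∀ n : ℤ, c * z (n - a) * w ^ n = (c * w ^ a) * (z (n - a) * w ^ (n - a)) := by
        intro n
        have h2 : n - a + a = n := by ring
        rw [show w ^ n = w ^ (n - a) * w ^ a from by rw [← zpow_add₀ hw, h2]]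
        ring
      rw [tsum_congr h1, tsum_mul_left]
      congr 1
      exact (Equiv.subRight a).tsum_eq fun k => z k * w ^ k
    have hchi : chiF w hw (AddMonoidAlgebra.single a c + f') = c * w ^ a + chiF w hw f' := by
      rw [map_add, chiF_single]
    rw [tsum_congr hsummand, Summable.tsum_add hs1 hs2, ih, hsingle, hchi, add_mul]

lemma chiF_g {w : ℂ} (hw : w ≠ 0) :
    chiF w hw ellOneG = (1/2 : ℂ) * (w + w⁻¹) := by
  rw [ellOneG_eq, map_add, chiF_single, chiF_single]
  rw [zpow_one, zpow_neg, zpow_one]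
  ring

/-! ### The main theorem -/

/-- With `x_i = g^{2^i}`:  for `i > j` and every `z ∈ ℓ¹(ℤ)` with `‖z‖₁ ≤ 1` one has
`‖x_i * z − x_j‖₁ ≥ 1/4`, while for `i ≤ j` there is `z` with `‖z‖₁ ≤ 1` and
`x_i * z = x_j`.  Hence `φ(x,y) = inf_{‖z‖≤1} ‖xz − y‖` orders the sequence `(x_i)`,
witnessing the order property (instability) of the convolution algebra `ℓ¹(ℤ)`. -/
theorem ellOne_order_property :
    (∀ i j : ℕ, j < i → ∀ z : ℤ → ℂ, Summable (fun n => ‖z n‖) →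
      (∑' n : ℤ, ‖z n‖) ≤ 1 →
      (1 / 4 : ℝ) ≤ ∑' n : ℤ, ‖ellOneConv (ellOneG ^ 2 ^ i) z n - (ellOneG ^ 2 ^ j).coeff n‖) ∧
    (∀ i j : ℕ, i ≤ j → ∃ z : ℤ → ℂ, Summable (fun n => ‖z n‖) ∧
      (∑' n : ℤ, ‖z n‖) ≤ 1 ∧
      ∀ n : ℤ, ellOneConv (ellOneG ^ 2 ^ i) z n = (ellOneG ^ 2 ^ j).coeff n) := by
  constructor
  · -- the hard estimate
    intro i j hij z hz hz1
    -- the point of the circle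
    set c : ℝ := (1/2 : ℝ) ^ (((2:ℝ) ^ j)⁻¹) with hc
    have hc0 : 0 < c := Real.rpow_pos_of_pos (by norm_num) _
    have hc1 : c ≤ 1 := Real.rpow_le_one (by norm_num) (by norm_num) (by positivity)
    have hcj : c ^ (2^j : ℕ) = 1/2 := by
      rw [hc, ← Real.rpow_natCast ((1/2 : ℝ) ^ (((2:ℝ) ^ j)⁻¹)) (2^j),
        ← Real.rpow_mul (by norm_num)]
      have h1 : ((2:ℝ) ^ j)⁻¹ * ((2^j : ℕ) : ℝ) = 1 := by
        rw [Nat.cast_pow]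
        push_cast
        exact inv_mul_cancel₀ (by positivity)
      rw [h1, Real.rpow_one]
    have hci : c ^ (2^i : ℕ) ≤ 1/4 := by
      have hsplit : (2:ℕ)^i = 2^j * 2^(i-j) := by
        rw [← pow_add]
        congr 1
        omega
      rw [hsplit, pow_mul, hcj]
      calc ((1:ℝ)/2) ^ (2^(i-j) : ℕ) ≤ (1/2 : ℝ) ^ (2 : ℕ) := by
            refine pow_le_pow_of_le_one (by norm_num) (by norm_num) ?_
            calc (2:ℕ) = 2^1 := by norm_num
              _ ≤ 2^(i-j) := Nat.pow_le_pow_right (by norm_num) (by omega)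
        _ = 1/4 := by norm_num
    set t₀ : ℝ := Real.arccos c with ht₀
    set w : ℂ := Complex.exp (t₀ * Complex.I) with hwdef
    have hw : w ≠ 0 := Complex.exp_ne_zero _
    have hw1 : ‖w‖ = 1 := by
      rw [hwdef]
      exact Complex.norm_exp_ofReal_mul_I t₀
    -- χ(g) = c
    have hcos : Real.cos t₀ = c := Real.cos_arccos (by linarith) hc1
    have hchig : chiF w hw ellOneG = (c : ℂ) := by
      rw [chiF_g]
      rw [hwdef, ← Complex.exp_neg]
      rw [show -((t₀ : ℂ) * Complex.I) = (-t₀ : ℂ) * Complex.I by ring]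
      rw [Complex.exp_mul_I, Complex.exp_mul_I, Complex.cos_neg, Complex.sin_neg]
      have : (1/2 : ℂ) * (Complex.cos t₀ + Complex.sin t₀ * Complex.I
          + (Complex.cos t₀ + -Complex.sin t₀ * Complex.I)) = Complex.cos t₀ := by ring
      rw [this, ← Complex.ofReal_cos, hcos]
    have hnormpow : ∀ k : ℕ, ‖chiF w hw (ellOneG ^ 2 ^ k)‖ = c ^ (2^k : ℕ) := by
      intro k
      rw [map_pow, hchig, norm_pow, Complex.norm_real, Real.norm_eq_abs,
        abs_of_pos hc0]
    -- the Gelfand transform of z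
    set A : ℂ := ∑' n : ℤ, z n * w ^ n with hA
    have hzw : Summable (fun n : ℤ => z n * w ^ n) := summable_mul_char hw1 z hz
    have hAle : ‖A‖ ≤ 1 := by
      have h1 : ‖A‖ ≤ ∑' n : ℤ, ‖z n * w ^ n‖ :=
        norm_tsum_le_tsum_norm (by
          refine hz.congr fun n => ?_
          rw [norm_mul, norm_zpow, hw1, one_zpow, mul_one])
      have h2 : ∑' n : ℤ, ‖z n * w ^ n‖ = ∑' n : ℤ, ‖z n‖ :=
        tsum_congr fun n => by rw [norm_mul, norm_zpow, hw1, one_zpow, mul_one]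
      calc ‖A‖ ≤ ∑' n : ℤ, ‖z n * w ^ n‖ := h1
        _ = ∑' n : ℤ, ‖z n‖ := h2
        _ ≤ 1 := hz1
    -- the difference
    set y : ℤ → ℂ := fun n => ellOneConv (ellOneG ^ 2 ^ i) z n - (ellOneG ^ 2 ^ j).coeff n with hy
    have hCs : Summable (fun n => ‖ellOneConv (ellOneG ^ 2 ^ i) z n‖) :=
      (conv_bound (ellOneG ^ 2 ^ i) z hz).1
    have hys : Summable (fun n => ‖y n‖) := by
      rw [summable_norm_iff]
      exact (summable_norm_iff.1 hCs).sub
        (summable_norm_iff.1 (summable_norm_finsupp (ellOneG ^ 2 ^ j)))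
    have hyws : Summable (fun n : ℤ => y n * w ^ n) := summable_mul_char hw1 y hys
    have hval : ∑' n : ℤ, y n * w ^ n
        = chiF w hw (ellOneG ^ 2 ^ i) * A - chiF w hw (ellOneG ^ 2 ^ j) := by
      have h1 : ∀ n : ℤ, y n * w ^ n
          = ellOneConv (ellOneG ^ 2 ^ i) z n * w ^ n - (ellOneG ^ 2 ^ j).coeff n * w ^ n := by
        intro n; rw [hy]; ring
      rw [tsum_congr h1,
        Summable.tsum_sub (summable_mul_char hw1 _ hCs)
          (summable_mul_char hw1 _ (summable_norm_finsupp _)),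
        chi_mult hw hw1 _ z hz, tsum_finsupp_char hw]
    have hlow : (1/4 : ℝ) ≤ ‖∑' n : ℤ, y n * w ^ n‖ := by
      rw [hval]
      have h1 : ‖chiF w hw (ellOneG ^ 2 ^ j)‖ - ‖chiF w hw (ellOneG ^ 2 ^ i) * A‖
          ≤ ‖chiF w hw (ellOneG ^ 2 ^ i) * A - chiF w hw (ellOneG ^ 2 ^ j)‖ := by
        rw [norm_sub_rev]
        exact norm_sub_norm_le _ _
      have h2 : ‖chiF w hw (ellOneG ^ 2 ^ j)‖ = (1/2 : ℝ) := by rw [hnormpow, hcj]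
      have h3 : ‖chiF w hw (ellOneG ^ 2 ^ i) * A‖ ≤ 1/4 := by
        rw [norm_mul, hnormpow]
        calc c ^ (2^i : ℕ) * ‖A‖ ≤ (1/4) * 1 :=
              mul_le_mul hci hAle (norm_nonneg _) (by norm_num)
          _ = 1/4 := by norm_num
      linarith
    have hfin : ‖∑' n : ℤ, y n * w ^ n‖ ≤ ∑' n : ℤ, ‖y n‖ := by
      have h1 : ‖∑' n : ℤ, y n * w ^ n‖ ≤ ∑' n : ℤ, ‖y n * w ^ n‖ :=
        norm_tsum_le_tsum_norm (by
          refine hys.congr fun n => ?_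
          rw [norm_mul, norm_zpow, hw1, one_zpow, mul_one])
      have h2 : ∑' n : ℤ, ‖y n * w ^ n‖ = ∑' n : ℤ, ‖y n‖ :=
        tsum_congr fun n => by rw [norm_mul, norm_zpow, hw1, one_zpow, mul_one]
      rw [← h2]; exact h1
    calc (1/4 : ℝ) ≤ ‖∑' n : ℤ, y n * w ^ n‖ := hlow
      _ ≤ ∑' n : ℤ, ‖y n‖ := hfin
  · -- the easy direction
    intro i j hij
    refine ⟨⇑(ellOneG ^ (2 ^ j - 2 ^ i)).coeff, summable_norm_finsupp _, tsum_norm_gpow _, ?_⟩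
    intro n
    rw [conv_finsupp, ← pow_add]
    have hle : (2:ℕ)^i ≤ 2^j := Nat.pow_le_pow_right (by norm_num) hij
    have h1 : 2^i + (2^j - 2^i) = 2^j := by omega
    rw [h1]
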